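/- Let N ≥ 5 and a₁, a₂, a₂' ∈ ℝ. The function (Φ₁ − Φ₂)(x) = (1/(4(N−4))) (x_N−1)/(|x̄|² + (x_N+1)²)^{(N−4)/2} + a₁ (x_N+1)/(|x̄|² + (x_N+1)²)^{N/2} + a₂ / (|x̄|² + (x_N+1)²)^{(N−2)/2} + a₂' satisfies −Δ(Φ₁ − Φ₂)(x) = x_N / (|x̄|² + (x_N+1)²)^{(N−2)/2} = x_N W_{1,0}(x) for all x ∈ ℝ^N_+. -/

import Mathlib

open MeasureTheory Filter Topology

noncomputable section

/-- The model for `ℝ^N_+`: pairs `(x̄, t)` with `x̄ ∈ ℝ^n` (Euclidean) and `t ∈ ℝ`;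
the open upper half-space is `{p | 0 < p.2}`. -/
abbrev HSp (n : ℕ) := EuclideanSpace ℝ (Fin n) × ℝ

/-- The open upper half-space. -/
def upperHalf (n : ℕ) : Set (HSp n) := {p | 0 < p.2}

/-- Directional derivative of `f` at `x` in direction `v`. -/
def pdv {n : ℕ} (v : HSp n) (f : HSp n → ℝ) (x : HSp n) : ℝ := fderiv ℝ f x v

/-- The `i`-th horizontal standard basis vector. -/
def eH {n : ℕ} (i : Fin n) : HSp n := (EuclideanSpace.single i 1, 0)

/-- The vertical standard basis vector. -/
def eV {n : ℕ} : HSp n := (0, 1)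

/-- The Laplacian `Δf = ∑ᵢ ∂ᵢᵢ f + ∂_NN f`. -/
def lap {n : ℕ} (f : HSp n → ℝ) (x : HSp n) : ℝ :=
  (∑ i : Fin n, pdv (eH i) (pdv (eH i) f) x) + pdv eV (pdv eV f) x

/-- The Euclidean length `|x|` of a point `x = (x̄, t)`. -/
def rad {n : ℕ} (x : HSp n) : ℝ := Real.sqrt (‖x.1‖ ^ 2 + x.2 ^ 2)

/-- The bubble `W_{λ,ξ}`. -/
def Bub (N : ℕ) (lam : ℝ) (ξ : EuclideanSpace ℝ (Fin (N - 1))) (x : HSp (N - 1)) : ℝ :=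
  lam ^ (((N : ℝ) - 2) / 2) / (‖x.1 - ξ‖ ^ 2 + (x.2 + lam) ^ 2) ^ (((N : ℝ) - 2) / 2)

/-- The trace `w_{λ,ξ}` of the bubble on the boundary. -/
def bub (N : ℕ) (lam : ℝ) (ξ y : EuclideanSpace ℝ (Fin (N - 1))) : ℝ := Bub N lam ξ (y, 0)

namespace Slv

variable {n : ℕ}

def π2 (n : ℕ) : HSp n →L[ℝ] ℝ := ContinuousLinearMap.snd ℝ _ ℝ

def pci (i : Fin n) : HSp n →L[ℝ] ℝ :=
  (EuclideanSpace.proj i).comp (ContinuousLinearMap.fst ℝ _ ℝ)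

lemma π2_apply (y : HSp n) : π2 n y = y.2 := rfl
lemma pci_apply (i : Fin n) (y : HSp n) : pci i y = y.1 i := rfl
@[simp] lemma π2_eH (i : Fin n) : π2 n (eH i) = 0 := rfl
@[simp] lemma π2_eV : π2 n (eV : HSp n) = 1 := rfl
@[simp] lemma pci_eH (i j : Fin n) : pci i (eH j) = if i = j then 1 else 0 := by
  simp [pci, eH, EuclideanSpace.single_apply]
@[simp] lemma pci_eV (i : Fin n) : pci i (eV : HSp n) = 0 := rfl

/-- the weight -/
def uu (n : ℕ) : HSp n → ℝ := fun y => ‖y.1‖ ^ 2 + (y.2 + 1) ^ 2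

lemma normsq_eq (z : EuclideanSpace ℝ (Fin n)) : ‖z‖ ^ 2 = ∑ i, z i ^ 2 := by
  rw [EuclideanSpace.norm_eq, Real.sq_sqrt (by positivity)]
  simp [Real.norm_eq_abs, sq_abs]

lemma uu_eq_sum (y : HSp n) : uu n y = (∑ i, y.1 i ^ 2) + (y.2 + 1) ^ 2 := by
  rw [uu, normsq_eq]

def DU (x : HSp n) : HSp n →L[ℝ] ℝ :=
  (∑ i, (2 * x.1 i) • pci i) + (2 * (x.2 + 1)) • π2 n

lemma hasFDerivAt_uu (x : HSp n) : HasFDerivAt (uu n) (DU x) x := by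
  have h1 : ∀ i : Fin n, HasFDerivAt (fun y : HSp n => y.1 i ^ 2) ((2 * x.1 i) • pci i) x := by
    intro i
    have := ((pci i).hasFDerivAt (x := x)).mul ((pci i).hasFDerivAt (x := x))
    simp only [pci_apply] at this
    rw [← add_smul, ← two_mul] at this
    exact this.congr_of_eventuallyEq (.of_forall fun y => pow_two _)
  have h2 : HasFDerivAt (fun y : HSp n => (y.2 + 1) ^ 2) ((2 * (x.2 + 1)) • π2 n) x := by
    have hb : HasFDerivAt (fun y : HSp n => y.2 + 1) (π2 n) x :=
      ((π2 n).hasFDerivAt (x := x)).add_const 1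
    have := hb.mul hb
    rw [← add_smul, ← two_mul] at this
    exact this.congr_of_eventuallyEq (.of_forall fun y => pow_two _)
  have hs := (HasFDerivAt.fun_sum (u := Finset.univ) (fun i _ => h1 i)).add h2
  exact (hs.congr_of_eventuallyEq (Filter.Eventually.of_forall fun y => (uu_eq_sum y))).congr_fderiv rfl

@[simp] lemma DU_eH (x : HSp n) (i : Fin n) : DU x (eH i) = 2 * x.1 i := by
  simp [DU, pci_eH, π2_eH, ContinuousLinearMap.sum_apply, mul_ite, mul_one, mul_zero, Finset.sum_ite_eq, Finset.sum_ite_eq']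

@[simp] lemma DU_eV (x : HSp n) : DU x (eV : HSp n) = 2 * (x.2 + 1) := by
  simp [DU, pci_eV, π2_eV, ContinuousLinearMap.sum_apply]


/-- affine function of the vertical coordinate -/
lemma hasFDerivAt_aff (a b : ℝ) (x : HSp n) :
    HasFDerivAt (fun y : HSp n => a * y.2 + b) (a • π2 n) x := by
  simpa [π2_apply] using (((π2 n).hasFDerivAt (x := x)).const_mul a).add_const b

def Tm (n : ℕ) (a b α : ℝ) : HSp n → ℝ := fun y => (a * y.2 + b) * uu n y ^ α

def DT (a b α : ℝ) (x : HSp n) : HSp n →L[ℝ] ℝ :=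
  (a * x.2 + b) • ((α * uu n x ^ (α - 1)) • DU x) + (uu n x ^ α) • (a • π2 n)

lemma hasFDerivAt_Tm {x : HSp n} (a b α : ℝ) (hx : uu n x ≠ 0) :
    HasFDerivAt (Tm n a b α) (DT a b α x) x :=
  (hasFDerivAt_aff a b x).mul ((hasFDerivAt_uu x).rpow_const (Or.inl hx))

lemma DT_eH (a b α : ℝ) (x : HSp n) (i : Fin n) :
    DT a b α x (eH i) = (a * x.2 + b) * (α * uu n x ^ (α - 1)) * (2 * x.1 i) := by
  simp [DT]; ring

lemma DT_eV (a b α : ℝ) (x : HSp n) :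
    DT a b α x (eV : HSp n) =
      (a * x.2 + b) * (α * uu n x ^ (α - 1)) * (2 * (x.2 + 1)) + uu n x ^ α * a := by
  simp [DT]; ring

def Qm (n : ℕ) (a b β γ : ℝ) (i : Fin n) : HSp n → ℝ :=
  fun y => (a * y.2 + b) * (β * uu n y ^ γ) * (2 * y.1 i)

def DQ (a b β γ : ℝ) (i : Fin n) (x : HSp n) : HSp n →L[ℝ] ℝ :=
  ((a * x.2 + b) * (β * uu n x ^ γ)) • ((2 : ℝ) • pci i) +
    (2 * x.1 i) • ((a * x.2 + b) • (β • ((γ * uu n x ^ (γ - 1)) • DU x)) +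
      (β * uu n x ^ γ) • (a • π2 n))

lemma hasFDerivAt_Qm {x : HSp n} (a b β γ : ℝ) (i : Fin n) (hx : uu n x ≠ 0) :
    HasFDerivAt (Qm n a b β γ i) (DQ a b β γ i x) x := by
  have h2 : HasFDerivAt (fun y : HSp n => β * uu n y ^ γ)
      (β • ((γ * uu n x ^ (γ - 1)) • DU x)) x :=
    (((hasFDerivAt_uu x).rpow_const (Or.inl hx))).const_mul β
  have h3 : HasFDerivAt (fun y : HSp n => 2 * y.1 i) ((2 : ℝ) • pci i) x :=
    ((pci i).hasFDerivAt (x := x)).const_mul 2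
  exact ((hasFDerivAt_aff a b x).mul h2).mul h3

lemma DQ_eH (a b β γ : ℝ) (x : HSp n) (i : Fin n) :
    DQ a b β γ i x (eH i) =
      2 * (a * x.2 + b) * β * uu n x ^ γ +
        4 * (a * x.2 + b) * β * γ * uu n x ^ (γ - 1) * x.1 i ^ 2 := by
  simp [DQ]; ring

def Rm (n : ℕ) (a b β γ : ℝ) : HSp n → ℝ :=
  fun y => (a * y.2 + b) * (β * uu n y ^ γ) * (2 * (y.2 + 1))

def DR (a b β γ : ℝ) (x : HSp n) : HSp n →L[ℝ] ℝ :=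
  ((a * x.2 + b) * (β * uu n x ^ γ)) • ((2 : ℝ) • π2 n) +
    (2 * (x.2 + 1)) • ((a * x.2 + b) • (β • ((γ * uu n x ^ (γ - 1)) • DU x)) +
      (β * uu n x ^ γ) • (a • π2 n))

lemma hasFDerivAt_Rm {x : HSp n} (a b β γ : ℝ) (hx : uu n x ≠ 0) :
    HasFDerivAt (Rm n a b β γ) (DR a b β γ x) x := by
  have h2 : HasFDerivAt (fun y : HSp n => β * uu n y ^ γ)
      (β • ((γ * uu n x ^ (γ - 1)) • DU x)) x :=
    (((hasFDerivAt_uu x).rpow_const (Or.inl hx))).const_mul β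
  have h3 : HasFDerivAt (fun y : HSp n => 2 * (y.2 + 1)) ((2 : ℝ) • π2 n) x := by
    simpa [mul_add, π2_apply] using (((π2 n).hasFDerivAt (x := x)).add_const 1).const_mul 2
  exact ((hasFDerivAt_aff a b x).mul h2).mul h3

lemma DR_eV (a b β γ : ℝ) (x : HSp n) :
    DR a b β γ x (eV : HSp n) =
      2 * (a * x.2 + b) * β * uu n x ^ γ +
        4 * (a * x.2 + b) * β * γ * uu n x ^ (γ - 1) * (x.2 + 1) ^ 2 +
        2 * a * β * uu n x ^ γ * (x.2 + 1) := by
  simp [DR]; ring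

end Slv

set_option maxHeartbeats 2000000

/-- `-Δ(Φ₁ - Φ₂) = x_N/(|x̄|² + (x_N+1)²)^{(N-2)/2} = x_N W_{1,0}` in the
upper half-space. -/
theorem Phi1_sub_Phi2_solves (N : ℕ) (hN : 5 ≤ N) (a₁ a₂ a₂' : ℝ) (Φ : HSp (N - 1) → ℝ)
    (hΦ : ∀ x : HSp (N - 1), Φ x =
      1 / (4 * ((N : ℝ) - 4)) * (x.2 - 1)
          / (‖x.1‖ ^ 2 + (x.2 + 1) ^ 2) ^ (((N : ℝ) - 4) / 2)
        + a₁ * (x.2 + 1) / (‖x.1‖ ^ 2 + (x.2 + 1) ^ 2) ^ ((N : ℝ) / 2)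
        + a₂ / (‖x.1‖ ^ 2 + (x.2 + 1) ^ 2) ^ (((N : ℝ) - 2) / 2)
        + a₂') :
    ∀ x ∈ upperHalf (N - 1),
      -(lap Φ x) = x.2 / (‖x.1‖ ^ 2 + (x.2 + 1) ^ 2) ^ (((N : ℝ) - 2) / 2) ∧
      x.2 / (‖x.1‖ ^ 2 + (x.2 + 1) ^ 2) ^ (((N : ℝ) - 2) / 2) = x.2 * Bub N 1 0 x := by
  intro x hx
  have hx2 : 0 < x.2 := hx
  have hN5 : (5 : ℝ) ≤ (N : ℝ) := by exact_mod_cast hN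
  have hN4 : ((N : ℝ) - 4) ≠ 0 := by linarith
  have hs0 : 0 < Slv.uu (N - 1) x := by
    have h1 : (0 : ℝ) < (x.2 + 1) ^ 2 := by positivity
    have h2 : (0 : ℝ) ≤ ‖x.1‖ ^ 2 := by positivity
    show (0 : ℝ) < ‖x.1‖ ^ 2 + (x.2 + 1) ^ 2
    linarith
  constructor
  swap
  · simp only [Bub, Real.one_rpow, sub_zero]
    rw [mul_one_div]
  set c : ℝ := 1 / (4 * ((N : ℝ) - 4)) with hc
  set α₁ : ℝ := -(((N : ℝ) - 4) / 2) with hα₁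
  set α₂ : ℝ := -((N : ℝ) / 2) with hα₂
  set α₃ : ℝ := -(((N : ℝ) - 2) / 2) with hα₃
  have hu0 : ∀ y : HSp (N - 1), (0 : ℝ) ≤ Slv.uu (N - 1) y := fun y => by
    show (0 : ℝ) ≤ ‖y.1‖ ^ 2 + (y.2 + 1) ^ 2; positivity
  have hΦ' : Φ = fun y => Slv.Tm (N - 1) c (-c) α₁ y + Slv.Tm (N - 1) a₁ a₁ α₂ y
      + Slv.Tm (N - 1) 0 a₂ α₃ y + a₂' := by
    funext y
    rw [hΦ y]
    simp only [Slv.Tm]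
    rw [hα₁, hα₂, hα₃,
      Real.rpow_neg (hu0 y), Real.rpow_neg (hu0 y), Real.rpow_neg (hu0 y)]
    simp only [Slv.uu, div_eq_mul_inv]
    ring
  have hVopen : IsOpen {y : HSp (N - 1) | Slv.uu (N - 1) y ≠ 0} := by
    have hcont : Continuous (Slv.uu (N - 1)) :=
      ((continuous_fst.norm.pow 2).add ((continuous_snd.add continuous_const).pow 2))
    exact isOpen_compl_singleton.preimage hcont
  have hxV : x ∈ {y : HSp (N - 1) | Slv.uu (N - 1) y ≠ 0} := hs0.ne'
  have hD : ∀ y ∈ {y : HSp (N - 1) | Slv.uu (N - 1) y ≠ 0},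
      HasFDerivAt Φ (Slv.DT c (-c) α₁ y + Slv.DT a₁ a₁ α₂ y + Slv.DT 0 a₂ α₃ y) y := by
    intro y hy
    rw [hΦ']
    exact (((Slv.hasFDerivAt_Tm c (-c) α₁ hy).add (Slv.hasFDerivAt_Tm a₁ a₁ α₂ hy)).add
      (Slv.hasFDerivAt_Tm 0 a₂ α₃ hy)).add_const a₂'
  have hmem : {y : HSp (N - 1) | Slv.uu (N - 1) y ≠ 0} ∈ 𝓝 x := hVopen.mem_nhds hxV
  -- horizontal second derivatives
  have keyH : ∀ i : Fin (N - 1), pdv (eH i) (pdv (eH i) Φ) x =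
      (2 * (c * x.2 + -c) * α₁ * Slv.uu (N - 1) x ^ (α₁ - 1)
        + 4 * (c * x.2 + -c) * α₁ * (α₁ - 1) * Slv.uu (N - 1) x ^ (α₁ - 1 - 1) * x.1 i ^ 2)
      + (2 * (a₁ * x.2 + a₁) * α₂ * Slv.uu (N - 1) x ^ (α₂ - 1)
        + 4 * (a₁ * x.2 + a₁) * α₂ * (α₂ - 1) * Slv.uu (N - 1) x ^ (α₂ - 1 - 1) * x.1 i ^ 2)
      + (2 * (0 * x.2 + a₂) * α₃ * Slv.uu (N - 1) x ^ (α₃ - 1)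
        + 4 * (0 * x.2 + a₂) * α₃ * (α₃ - 1) * Slv.uu (N - 1) x ^ (α₃ - 1 - 1) * x.1 i ^ 2) := by
    intro i
    have hev : pdv (eH i) Φ =ᶠ[𝓝 x] fun y =>
        Slv.Qm (N - 1) c (-c) α₁ (α₁ - 1) i y + Slv.Qm (N - 1) a₁ a₁ α₂ (α₂ - 1) i y
          + Slv.Qm (N - 1) 0 a₂ α₃ (α₃ - 1) i y := by
      filter_upwards [hmem] with y hy
      show fderiv ℝ Φ y (eH i) = _
      rw [(hD y hy).fderiv]
      simp only [ContinuousLinearMap.add_apply]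
      rw [Slv.DT_eH, Slv.DT_eH, Slv.DT_eH]
      simp only [Slv.Qm]
    have hQ := ((Slv.hasFDerivAt_Qm c (-c) α₁ (α₁ - 1) i hs0.ne').fun_add
        (Slv.hasFDerivAt_Qm a₁ a₁ α₂ (α₂ - 1) i hs0.ne')).fun_add
        (Slv.hasFDerivAt_Qm 0 a₂ α₃ (α₃ - 1) i hs0.ne')
    rw [pdv, hev.fderiv_eq, hQ.fderiv]
    simp only [ContinuousLinearMap.add_apply]
    rw [Slv.DQ_eH, Slv.DQ_eH, Slv.DQ_eH]
  -- vertical second derivative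
  have keyV : pdv eV (pdv eV Φ) x =
      ((2 * (c * x.2 + -c) * α₁ * Slv.uu (N - 1) x ^ (α₁ - 1)
          + 4 * (c * x.2 + -c) * α₁ * (α₁ - 1) * Slv.uu (N - 1) x ^ (α₁ - 1 - 1) * (x.2 + 1) ^ 2
          + 2 * c * α₁ * Slv.uu (N - 1) x ^ (α₁ - 1) * (x.2 + 1))
        + ((0 * x.2 + c) * (α₁ * Slv.uu (N - 1) x ^ (α₁ - 1)) * (2 * (x.2 + 1))
          + Slv.uu (N - 1) x ^ α₁ * 0))
      + ((2 * (a₁ * x.2 + a₁) * α₂ * Slv.uu (N - 1) x ^ (α₂ - 1)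
          + 4 * (a₁ * x.2 + a₁) * α₂ * (α₂ - 1) * Slv.uu (N - 1) x ^ (α₂ - 1 - 1) * (x.2 + 1) ^ 2
          + 2 * a₁ * α₂ * Slv.uu (N - 1) x ^ (α₂ - 1) * (x.2 + 1))
        + ((0 * x.2 + a₁) * (α₂ * Slv.uu (N - 1) x ^ (α₂ - 1)) * (2 * (x.2 + 1))
          + Slv.uu (N - 1) x ^ α₂ * 0))
      + ((2 * (0 * x.2 + a₂) * α₃ * Slv.uu (N - 1) x ^ (α₃ - 1)
          + 4 * (0 * x.2 + a₂) * α₃ * (α₃ - 1) * Slv.uu (N - 1) x ^ (α₃ - 1 - 1) * (x.2 + 1) ^ 2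
          + 2 * 0 * α₃ * Slv.uu (N - 1) x ^ (α₃ - 1) * (x.2 + 1))
        + ((0 * x.2 + 0) * (α₃ * Slv.uu (N - 1) x ^ (α₃ - 1)) * (2 * (x.2 + 1))
          + Slv.uu (N - 1) x ^ α₃ * 0)) := by
    have hev : pdv eV Φ =ᶠ[𝓝 x] fun y =>
        (Slv.Rm (N - 1) c (-c) α₁ (α₁ - 1) y + Slv.Tm (N - 1) 0 c α₁ y)
        + (Slv.Rm (N - 1) a₁ a₁ α₂ (α₂ - 1) y + Slv.Tm (N - 1) 0 a₁ α₂ y)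
        + (Slv.Rm (N - 1) 0 a₂ α₃ (α₃ - 1) y + Slv.Tm (N - 1) 0 0 α₃ y) := by
      filter_upwards [hmem] with y hy
      show fderiv ℝ Φ y eV = _
      rw [(hD y hy).fderiv]
      simp only [ContinuousLinearMap.add_apply]
      rw [Slv.DT_eV, Slv.DT_eV, Slv.DT_eV]
      simp only [Slv.Rm, Slv.Tm]
      ring
    have hQ := (((Slv.hasFDerivAt_Rm c (-c) α₁ (α₁ - 1) hs0.ne').fun_add
          (Slv.hasFDerivAt_Tm 0 c α₁ hs0.ne')).fun_add
        ((Slv.hasFDerivAt_Rm a₁ a₁ α₂ (α₂ - 1) hs0.ne').fun_add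
          (Slv.hasFDerivAt_Tm 0 a₁ α₂ hs0.ne'))).fun_add
        ((Slv.hasFDerivAt_Rm 0 a₂ α₃ (α₃ - 1) hs0.ne').fun_add
          (Slv.hasFDerivAt_Tm 0 0 α₃ hs0.ne'))
    rw [pdv, hev.fderiv_eq, hQ.fderiv]
    simp only [ContinuousLinearMap.add_apply]
    rw [Slv.DR_eV, Slv.DR_eV, Slv.DR_eV, Slv.DT_eV, Slv.DT_eV, Slv.DT_eV]
  -- sum over horizontal directions
  have hsum : ∑ i : Fin (N - 1), pdv (eH i) (pdv (eH i) Φ) x =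
      ((N : ℝ) - 1) * (2 * (c * x.2 + -c) * α₁ * Slv.uu (N - 1) x ^ (α₁ - 1)
          + 2 * (a₁ * x.2 + a₁) * α₂ * Slv.uu (N - 1) x ^ (α₂ - 1)
          + 2 * (0 * x.2 + a₂) * α₃ * Slv.uu (N - 1) x ^ (α₃ - 1))
        + (4 * (c * x.2 + -c) * α₁ * (α₁ - 1) * Slv.uu (N - 1) x ^ (α₁ - 1 - 1)
          + 4 * (a₁ * x.2 + a₁) * α₂ * (α₂ - 1) * Slv.uu (N - 1) x ^ (α₂ - 1 - 1)
          + 4 * (0 * x.2 + a₂) * α₃ * (α₃ - 1) * Slv.uu (N - 1) x ^ (α₃ - 1 - 1)) * ‖x.1‖ ^ 2 := by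
    have step : ∀ i : Fin (N - 1), pdv (eH i) (pdv (eH i) Φ) x =
        (2 * (c * x.2 + -c) * α₁ * Slv.uu (N - 1) x ^ (α₁ - 1)
          + 2 * (a₁ * x.2 + a₁) * α₂ * Slv.uu (N - 1) x ^ (α₂ - 1)
          + 2 * (0 * x.2 + a₂) * α₃ * Slv.uu (N - 1) x ^ (α₃ - 1))
        + (4 * (c * x.2 + -c) * α₁ * (α₁ - 1) * Slv.uu (N - 1) x ^ (α₁ - 1 - 1)
          + 4 * (a₁ * x.2 + a₁) * α₂ * (α₂ - 1) * Slv.uu (N - 1) x ^ (α₂ - 1 - 1)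
          + 4 * (0 * x.2 + a₂) * α₃ * (α₃ - 1) * Slv.uu (N - 1) x ^ (α₃ - 1 - 1)) * x.1 i ^ 2 := by
      intro i
      rw [keyH i]; ring
    rw [Finset.sum_congr rfl fun i _ => step i, Finset.sum_add_distrib,
      Finset.sum_const, ← Finset.mul_sum, ← Slv.normsq_eq, Finset.card_univ,
      Fintype.card_fin, nsmul_eq_mul, Nat.cast_sub (by omega : 1 ≤ N), Nat.cast_one]
  -- assemble
  rw [lap, hsum, keyV]
  have hrhs : x.2 / (‖x.1‖ ^ 2 + (x.2 + 1) ^ 2) ^ (((N : ℝ) - 2) / 2)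
      = x.2 * Slv.uu (N - 1) x ^ α₃ := by
    rw [hα₃, Real.rpow_neg (hu0 x), div_eq_mul_inv]
    rfl
  rw [hrhs]
  have hrel : Slv.uu (N - 1) x ^ α₁ = Slv.uu (N - 1) x ^ α₃ * Slv.uu (N - 1) x := by
    rw [show α₁ = α₃ + 1 by rw [hα₁, hα₃]; ring, Real.rpow_add_one hs0.ne']
  simp only [Real.rpow_sub hs0, Real.rpow_one]
  rw [hrel]
  rw [show ‖x.1‖ ^ 2 = Slv.uu (N - 1) x - (x.2 + 1) ^ 2 by
    show ‖x.1‖ ^ 2 = (‖x.1‖ ^ 2 + (x.2 + 1) ^ 2) - (x.2 + 1) ^ 2; ring]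
  rw [hα₁, hα₂, hα₃, hc]
  field_simp
  ring
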